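/- arXiv:1203.4177 — 3 statements merged into one kernel-verified Lean document; each statement's English description precedes it below -/
import Mathlib

section
/- Assume the clearing condition holds for every area a ∈ A and hour t ∈ T. Define the economic surplus Ω(π,β,φ,δ,τ) := ∑_{a∈A} ∑_{t∈T} [ ∑_{h∈H_{a,t}} ((p_h+Δp_h)Δq_h δ_h − ½ Δp_h Δq_h δ_h²) − π_{a,t}·( q̲_{a,t} + ∑_{h∈H_{a,t}} Δq_h δ_h ) + ∑_{b∈B_a} (p_b − π_{a,t}) q_{b,t} β_b + ∑_{f∈F_a} (p_f − π_{a,t}) q_f φ_{f,t} ] + ∑_{c∈C} ∑_{t∈T} (π_{s(c),t} − π_{r(c),t}) τ_{c,t}. Then Ω(π,β,φ,δ,τ) = ∑_{a∈A} ∑_{t∈T} ∑_{h∈H_{a,t}} ((p_h+Δp_h)Δq_h δ_h − ½ Δp_h Δq_h δ_h²) + ∑_{b∈B} ∑_{t∈T} p_b q_{b,t} β_b + ∑_{f∈F} ∑_{t∈T} p_f q_f φ_{f,t}; in particular Ω does not depend on the prices π or the flows τ. -/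
/-- Under the clearing condition, the economic surplus (hourly surplus,
block and flex bid surplus, and congestion rent) simplifies to an expression that does
not depend on the prices `π` or the flows `τ`. -/
theorem economic_surplus_simplification
    {A T H B F C : Type*} [Fintype A] [Fintype T] [Fintype H] [Fintype B] [Fintype F]
    [Fintype C] [DecidableEq A] [DecidableEq T]
    (areaH : H → A) (hourH : H → T) (areaB : B → A) (areaF : F → A)
    (r s : C → A)
    (p Δp Δq : H → ℝ) (qmin : A → T → ℝ)
    (pB : B → ℝ) (qB : B → T → ℝ) (pF : F → ℝ) (qF : F → ℝ)
    (π : A → T → ℝ) (β : B → ℝ) (φ : F → T → ℝ) (δ : H → ℝ) (τ : C → T → ℝ)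
    (hclear : ∀ (a : A) (t : T),
      qmin a t
        + ∑ h ∈ Finset.univ.filter (fun h => areaH h = a ∧ hourH h = t), Δq h * δ h
        + ∑ b ∈ Finset.univ.filter (fun b => areaB b = a), qB b t * β b
        + ∑ f ∈ Finset.univ.filter (fun f => areaF f = a), qF f * φ f t
      = (∑ c ∈ Finset.univ.filter (fun c => s c = a), τ c t)
        - ∑ c ∈ Finset.univ.filter (fun c => r c = a), τ c t) :
    ((∑ a : A, ∑ t : T,
        ((∑ h ∈ Finset.univ.filter (fun h => areaH h = a ∧ hourH h = t),
            ((p h + Δp h) * Δq h * δ h - (1 / 2) * Δp h * Δq h * δ h ^ 2))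
          - π a t * (qmin a t
              + ∑ h ∈ Finset.univ.filter (fun h => areaH h = a ∧ hourH h = t), Δq h * δ h)
          + (∑ b ∈ Finset.univ.filter (fun b => areaB b = a), (pB b - π a t) * qB b t * β b)
          + ∑ f ∈ Finset.univ.filter (fun f => areaF f = a), (pF f - π a t) * qF f * φ f t))
      + ∑ c : C, ∑ t : T, (π (s c) t - π (r c) t) * τ c t)
    = (∑ a : A, ∑ t : T,
        ∑ h ∈ Finset.univ.filter (fun h => areaH h = a ∧ hourH h = t),
          ((p h + Δp h) * Δq h * δ h - (1 / 2) * Δp h * Δq h * δ h ^ 2))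
      + (∑ b : B, ∑ t : T, pB b * qB b t * β b)
      + ∑ f : F, ∑ t : T, pF f * qF f * φ f t := by
  classical
  -- rewrite inner summand
  have hB : ∀ (a : A) (t : T),
      (∑ b ∈ Finset.univ.filter (fun b => areaB b = a), (pB b - π a t) * qB b t * β b)
      = (∑ b ∈ Finset.univ.filter (fun b => areaB b = a), pB b * qB b t * β b)
        - π a t * ∑ b ∈ Finset.univ.filter (fun b => areaB b = a), qB b t * β b := by
    intro a t
    rw [Finset.mul_sum, ← Finset.sum_sub_distrib]
    exact Finset.sum_congr rfl (fun b _ => by ring)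
  have hF : ∀ (a : A) (t : T),
      (∑ f ∈ Finset.univ.filter (fun f => areaF f = a), (pF f - π a t) * qF f * φ f t)
      = (∑ f ∈ Finset.univ.filter (fun f => areaF f = a), pF f * qF f * φ f t)
        - π a t * ∑ f ∈ Finset.univ.filter (fun f => areaF f = a), qF f * φ f t := by
    intro a t
    rw [Finset.mul_sum, ← Finset.sum_sub_distrib]
    exact Finset.sum_congr rfl (fun f _ => by ring)
  have hinner : ∀ (a : A) (t : T),
      ((∑ h ∈ Finset.univ.filter (fun h => areaH h = a ∧ hourH h = t),
            ((p h + Δp h) * Δq h * δ h - (1 / 2) * Δp h * Δq h * δ h ^ 2))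
          - π a t * (qmin a t
              + ∑ h ∈ Finset.univ.filter (fun h => areaH h = a ∧ hourH h = t), Δq h * δ h)
          + (∑ b ∈ Finset.univ.filter (fun b => areaB b = a), (pB b - π a t) * qB b t * β b)
          + ∑ f ∈ Finset.univ.filter (fun f => areaF f = a), (pF f - π a t) * qF f * φ f t)
      = (∑ h ∈ Finset.univ.filter (fun h => areaH h = a ∧ hourH h = t),
            ((p h + Δp h) * Δq h * δ h - (1 / 2) * Δp h * Δq h * δ h ^ 2))
        + (∑ b ∈ Finset.univ.filter (fun b => areaB b = a), pB b * qB b t * β b)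
        + (∑ f ∈ Finset.univ.filter (fun f => areaF f = a), pF f * qF f * φ f t)
        - π a t * ((∑ c ∈ Finset.univ.filter (fun c => s c = a), τ c t)
            - ∑ c ∈ Finset.univ.filter (fun c => r c = a), τ c t) := by
    intro a t
    rw [hB a t, hF a t, ← hclear a t]
    ring
  calc
    _ = (∑ a : A, ∑ t : T,
          ((∑ h ∈ Finset.univ.filter (fun h => areaH h = a ∧ hourH h = t),
              ((p h + Δp h) * Δq h * δ h - (1 / 2) * Δp h * Δq h * δ h ^ 2))
            + (∑ b ∈ Finset.univ.filter (fun b => areaB b = a), pB b * qB b t * β b)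
            + (∑ f ∈ Finset.univ.filter (fun f => areaF f = a), pF f * qF f * φ f t)
            - π a t * ((∑ c ∈ Finset.univ.filter (fun c => s c = a), τ c t)
                - ∑ c ∈ Finset.univ.filter (fun c => r c = a), τ c t)))
        + ∑ c : C, ∑ t : T, (π (s c) t - π (r c) t) * τ c t := by
        congr 1
        exact Finset.sum_congr rfl (fun a _ => Finset.sum_congr rfl (fun t _ => hinner a t))
    _ = _ := by
        simp only [Finset.sum_add_distrib, Finset.sum_sub_distrib]
        have h1 : ∑ a : A, ∑ t : T,
            ∑ b ∈ Finset.univ.filter (fun b => areaB b = a), pB b * qB b t * β b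
            = ∑ b : B, ∑ t : T, pB b * qB b t * β b := by
          conv_lhs => rw [Finset.sum_comm]
          conv_rhs => rw [Finset.sum_comm]
          refine Finset.sum_congr rfl (fun t _ => ?_)
          exact Finset.sum_fiberwise _ _ _
        have h2 : ∑ a : A, ∑ t : T,
            ∑ f ∈ Finset.univ.filter (fun f => areaF f = a), pF f * qF f * φ f t
            = ∑ f : F, ∑ t : T, pF f * qF f * φ f t := by
          conv_lhs => rw [Finset.sum_comm]
          conv_rhs => rw [Finset.sum_comm]
          refine Finset.sum_congr rfl (fun t _ => ?_)
          exact Finset.sum_fiberwise _ _ _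
        have h3 : ∑ a : A, ∑ t : T,
            π a t * ((∑ c ∈ Finset.univ.filter (fun c => s c = a), τ c t)
              - ∑ c ∈ Finset.univ.filter (fun c => r c = a), τ c t)
            = ∑ c : C, ∑ t : T, (π (s c) t - π (r c) t) * τ c t := by
          conv_lhs => rw [Finset.sum_comm]
          conv_rhs => rw [Finset.sum_comm]
          refine Finset.sum_congr rfl (fun t _ => ?_)
          have hs : ∑ a : A, π a t * ∑ c ∈ Finset.univ.filter (fun c => s c = a), τ c t
              = ∑ c : C, π (s c) t * τ c t := by
            rw [← Finset.sum_fiberwise Finset.univ s (fun c => π (s c) t * τ c t)]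
            refine Finset.sum_congr rfl (fun a _ => ?_)
            rw [Finset.mul_sum]
            refine Finset.sum_congr rfl (fun c hc => ?_)
            rw [(Finset.mem_filter.mp hc).2]
          have hr : ∑ a : A, π a t * ∑ c ∈ Finset.univ.filter (fun c => r c = a), τ c t
              = ∑ c : C, π (r c) t * τ c t := by
            rw [← Finset.sum_fiberwise Finset.univ r (fun c => π (r c) t * τ c t)]
            refine Finset.sum_congr rfl (fun a _ => ?_)
            rw [Finset.mul_sum]
            refine Finset.sum_congr rfl (fun c hc => ?_)
            rw [(Finset.mem_filter.mp hc).2]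
          calc ∑ a : A, π a t * ((∑ c ∈ Finset.univ.filter (fun c => s c = a), τ c t)
                - ∑ c ∈ Finset.univ.filter (fun c => r c = a), τ c t)
              = (∑ a : A, π a t * ∑ c ∈ Finset.univ.filter (fun c => s c = a), τ c t)
                - ∑ a : A, π a t * ∑ c ∈ Finset.univ.filter (fun c => r c = a), τ c t := by
                rw [← Finset.sum_sub_distrib]
                exact Finset.sum_congr rfl (fun a _ => by ring)
            _ = ∑ c : C, (π (s c) t - π (r c) t) * τ c t := by
                rw [hs, hr, ← Finset.sum_sub_distrib]
                exact Finset.sum_congr rfl (fun c _ => by ring)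
        rw [h1, h2, h3]
        ring
end

section
/- (Price coupling through an active ramping constraint.) Let c be an interconnector with source r and sink s, ramp rate τ̃_c > 0, hours T = {0,…,n−1}, a flow τ_{c,·} with given τ_{c,−1}, and prices π. Suppose (τ, π) satisfies the flow price condition on c (i.e., there exist nonnegative multipliers μ̄, μ̲, ρ̃, ρ̰ satisfying the stationarity and complementarity equations for all hours), and suppose for some t with t+1 ∈ T: (a) τ̲_{c,t} < τ_{c,t} < τ̄_{c,t} and τ̲_{c,t+1} < τ_{c,t+1} < τ̄_{c,t+1}; (b) τ_{c,t+1} − τ_{c,t} = τ̃_c; (c) for every u ∈ T with u ≠ t+1, −τ̃_c < τ_{c,u} − τ_{c,u−1} < τ̃_c. Then π_{s,t} − π_{r,t} = −(π_{s,t+1} − π_{r,t+1}) and π_{r,t} ≥ π_{s,t}. -/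
/-- The flow in the previous hour: for hour `0` it is the flow `τprev` in the last hour of
the previous day, otherwise the flow in hour `t - 1`. -/
def prevFlow {n : ℕ} (τprev : ℝ) (τ : Fin n → ℝ) (t : Fin n) : ℝ :=
  if _ : (t : ℕ) = 0 then τprev
  else τ ⟨(t : ℕ) - 1, Nat.lt_of_le_of_lt (Nat.sub_le _ _) t.isLt⟩

/-- The term for hour `t + 1`, present only if `t + 1` is still an hour of the day. -/
def nextTerm {n : ℕ} (f : Fin n → ℝ) (t : Fin n) : ℝ :=
  if h : (t : ℕ) + 1 < n then f ⟨(t : ℕ) + 1, h⟩ else 0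

/-- price coupling through an active ramping constraint. If the flow
price condition holds on an interconnector, the ATC bounds are slack in hours `t` and
`t + 1`, the ramping constraint is binding in forward direction between `t` and `t + 1`,
and ramping is slack everywhere else, then the price differences in hours `t` and `t + 1`
are opposite and the source price dominates the sink price in hour `t`. -/
theorem price_coupling_active_ramping {n : ℕ}
    (τlo τhi : Fin n → ℝ) (τtil : ℝ) (hτtil : 0 < τtil) (τprev : ℝ)
    (τ : Fin n → ℝ) (πr πs : Fin n → ℝ)
    (hfpc : ∃ μbar μlow ρt ρb : Fin n → ℝ,
      (∀ u, 0 ≤ μbar u ∧ 0 ≤ μlow u ∧ 0 ≤ ρt u ∧ 0 ≤ ρb u) ∧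
      ∀ u : Fin n,
        (μbar u - μlow u) + (ρt u - ρb u)
            + nextTerm (fun v => ρb v - ρt v) u + πr u - πs u = 0 ∧
          (τ u - τhi u) * μbar u = 0 ∧
          (τlo u - τ u) * μlow u = 0 ∧
          (τ u - prevFlow τprev τ u - τtil) * ρt u = 0 ∧
          (prevFlow τprev τ u - τ u - τtil) * ρb u = 0)
    (t : Fin n) (ht1 : (t : ℕ) + 1 < n)
    (ha : τlo t < τ t ∧ τ t < τhi t ∧
      τlo ⟨(t : ℕ) + 1, ht1⟩ < τ ⟨(t : ℕ) + 1, ht1⟩ ∧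
      τ ⟨(t : ℕ) + 1, ht1⟩ < τhi ⟨(t : ℕ) + 1, ht1⟩)
    (hb : τ ⟨(t : ℕ) + 1, ht1⟩ - τ t = τtil)
    (hc : ∀ u : Fin n, (u : ℕ) ≠ (t : ℕ) + 1 →
      -τtil < τ u - prevFlow τprev τ u ∧ τ u - prevFlow τprev τ u < τtil) :
    πs t - πr t = -(πs ⟨(t : ℕ) + 1, ht1⟩ - πr ⟨(t : ℕ) + 1, ht1⟩) ∧ πs t ≤ πr t := by

  obtain ⟨μbar, μlow, ρt, ρb, hnn, heq⟩ := hfpc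
  set t1 : Fin n := ⟨(t : ℕ) + 1, ht1⟩ with ht1def
  -- previous flow at t1 is τ t
  have hprev1 : prevFlow τprev τ t1 = τ t := by
    simp [prevFlow, t1]
  -- μbar t, μlow t, μbar t1, μlow t1 are zero
  have hmub : μbar t = 0 :=
    (mul_eq_zero.mp (heq t).2.1).resolve_left (sub_ne_zero.mpr (ne_of_lt ha.2.1))
  have hmul : μlow t = 0 :=
    (mul_eq_zero.mp (heq t).2.2.1).resolve_left (sub_ne_zero.mpr (ne_of_lt ha.1))
  have hmub1 : μbar t1 = 0 :=
    (mul_eq_zero.mp (heq t1).2.1).resolve_left (sub_ne_zero.mpr (ne_of_lt ha.2.2.2))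
  have hmul1 : μlow t1 = 0 :=
    (mul_eq_zero.mp (heq t1).2.2.1).resolve_left (sub_ne_zero.mpr (ne_of_lt ha.2.2.1))
  -- ramping slack at t ⇒ ρt t = ρb t = 0
  have hct := hc t (by omega)
  have hρtt : ρt t = 0 :=
    (mul_eq_zero.mp (heq t).2.2.2.1).resolve_left (by intro h; nlinarith [hct.2])
  have hρbt : ρb t = 0 :=
    (mul_eq_zero.mp (heq t).2.2.2.2).resolve_left (by intro h; nlinarith [hct.1])
  -- ρb t1 = 0 since factor is -2τtil
  have hρbt1 : ρb t1 = 0 := by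
    have := (heq t1).2.2.2.2
    rw [hprev1] at this
    exact (mul_eq_zero.mp this).resolve_left (by intro h; nlinarith)
  -- nextTerm at t
  have hnt : nextTerm (fun v => ρb v - ρt v) t = -ρt t1 := by
    simp only [nextTerm, dif_pos ht1]
    rw [show (⟨(t : ℕ) + 1, ht1⟩ : Fin n) = t1 from rfl, hρbt1]
    ring
  -- nextTerm at t1 is 0
  have hnt1 : nextTerm (fun v => ρb v - ρt v) t1 = 0 := by
    simp only [nextTerm]
    split
    · rename_i h2
      have h2' : (t1 : ℕ) + 1 < n := h2
      set t2 : Fin n := ⟨(t1 : ℕ) + 1, h2'⟩ with ht2def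
      have hprev2 : prevFlow τprev τ t2 = τ t1 := by
        simp [prevFlow, t2, t1]
      have hct2 := hc t2 (by simp [t2, t1])
      rw [hprev2] at hct2
      have hρtt2 : ρt t2 = 0 := by
        have := (heq t2).2.2.2.1
        rw [hprev2] at this
        exact (mul_eq_zero.mp this).resolve_left (by intro h; nlinarith [hct2.2])
      have hρbt2 : ρb t2 = 0 := by
        have := (heq t2).2.2.2.2
        rw [hprev2] at this
        exact (mul_eq_zero.mp this).resolve_left (by intro h; nlinarith [hct2.1])
      show ρb t2 - ρt t2 = 0
      rw [hρtt2, hρbt2]; ring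
    · rfl
  have hst := (heq t).1
  have hst1 := (heq t1).1
  rw [hnt, hmub, hmul, hρtt, hρbt] at hst
  rw [hnt1, hmub1, hmul1, hρbt1] at hst1
  have hρnn := (hnn t1).2.2.1
  constructor
  · linarith
  · linarith
end

section
/- (Price differences require binding transmission constraints.) Let c be an interconnector with source r and sink s, hours T = {0,…,n−1}, a flow τ_{c,·} with τ̲_{c,t} ≤ τ_{c,t} ≤ τ̄_{c,t} for all t and given τ_{c,−1}, ramp rate τ̃_c, and prices π. If (τ, π) satisfies the flow price condition on c, then for every t ∈ T: (i) π_{r,t} < π_{s,t} implies τ_{c,t} = τ̄_{c,t}, or τ_{c,t} − τ_{c,t−1} = τ̃_c, or (t+1 ∈ T and τ_{c,t} − τ_{c,t+1} = τ̃_c); (ii) π_{r,t} > π_{s,t} implies τ_{c,t} = τ̲_{c,t}, or τ_{c,t−1} − τ_{c,t} = τ̃_c, or (t+1 ∈ T and τ_{c,t+1} − τ_{c,t} = τ̃_c). -/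
/-- price differences require binding transmission constraints. If the
flow price condition holds on an interconnector, then a price difference between the two
areas in some hour implies that a corresponding ATC bound or a ramping constraint is
binding. -/
theorem price_difference_requires_binding_constraint {n : ℕ}
    (τlo τhi : Fin n → ℝ) (τtil : ℝ) (τprev : ℝ)
    (τ : Fin n → ℝ) (hτ : ∀ t, τlo t ≤ τ t ∧ τ t ≤ τhi t)
    (πr πs : Fin n → ℝ)
    (hfpc : ∃ μbar μlow ρt ρb : Fin n → ℝ,
      (∀ u, 0 ≤ μbar u ∧ 0 ≤ μlow u ∧ 0 ≤ ρt u ∧ 0 ≤ ρb u) ∧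
      ∀ u : Fin n,
        (μbar u - μlow u) + (ρt u - ρb u)
            + nextTerm (fun v => ρb v - ρt v) u + πr u - πs u = 0 ∧
          (τ u - τhi u) * μbar u = 0 ∧
          (τlo u - τ u) * μlow u = 0 ∧
          (τ u - prevFlow τprev τ u - τtil) * ρt u = 0 ∧
          (prevFlow τprev τ u - τ u - τtil) * ρb u = 0) :
    ∀ t : Fin n,
      (πr t < πs t →
        τ t = τhi t ∨ τ t - prevFlow τprev τ t = τtil ∨
          ∃ h : (t : ℕ) + 1 < n, τ t - τ ⟨(t : ℕ) + 1, h⟩ = τtil) ∧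
      (πs t < πr t →
        τ t = τlo t ∨ prevFlow τprev τ t - τ t = τtil ∨
          ∃ h : (t : ℕ) + 1 < n, τ ⟨(t : ℕ) + 1, h⟩ - τ t = τtil) := by
  obtain ⟨μbar, μlow, ρt, ρb, hnn, heq⟩ := hfpc
  intro t
  obtain ⟨he, hhi, hlo, hrt, hrb⟩ := heq t
  obtain ⟨hb0, hl0, ht0, hbb0⟩ := hnn t
  by_cases hn : (t : ℕ) + 1 < n
  · set t' : Fin n := ⟨(t : ℕ) + 1, hn⟩ with ht'
    have hprev : prevFlow τprev τ t' = τ t := by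
      have : ((t' : ℕ) = 0) = False := by simp [ht']
      rw [prevFlow]
      rw [dif_neg (by simp [ht'])]
      exact congrArg τ (Fin.ext (by simp [ht']))
    obtain ⟨_, _, _, hrt', hrb'⟩ := heq t'
    obtain ⟨_, _, ht0', hbb0'⟩ := hnn t'
    have hne : nextTerm (fun v => ρb v - ρt v) t = ρb t' - ρt t' := by
      simp [nextTerm, hn, ht']
    rw [hne] at he
    constructor
    · intro hπ
      by_cases h1 : μbar t = 0
      · by_cases h2 : ρt t = 0
        · by_cases h3 : ρb t' = 0
          · exfalso; linarith
          · refine Or.inr (Or.inr ⟨hn, ?_⟩)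
            show τ t - τ t' = τtil
            rcases mul_eq_zero.mp hrb' with h | h
            · rw [hprev] at h; linarith
            · exact absurd h h3
        · refine Or.inr (Or.inl ?_)
          rcases mul_eq_zero.mp hrt with h | h
          · linarith
          · exact absurd h h2
      · refine Or.inl ?_
        rcases mul_eq_zero.mp hhi with h | h
        · linarith
        · exact absurd h h1
    · intro hπ
      by_cases h1 : μlow t = 0
      · by_cases h2 : ρb t = 0
        · by_cases h3 : ρt t' = 0
          · exfalso; linarith
          · refine Or.inr (Or.inr ⟨hn, ?_⟩)
            show τ t' - τ t = τtil
            rcases mul_eq_zero.mp hrt' with h | h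
            · rw [hprev] at h; linarith
            · exact absurd h h3
        · refine Or.inr (Or.inl ?_)
          rcases mul_eq_zero.mp hrb with h | h
          · linarith
          · exact absurd h h2
      · refine Or.inl ?_
        rcases mul_eq_zero.mp hlo with h | h
        · linarith
        · exact absurd h h1
  · have hne : nextTerm (fun v => ρb v - ρt v) t = 0 := by
      simp [nextTerm, hn]
    rw [hne] at he
    constructor
    · intro hπ
      by_cases h1 : μbar t = 0
      · by_cases h2 : ρt t = 0
        · exfalso; linarith
        · refine Or.inr (Or.inl ?_)
          rcases mul_eq_zero.mp hrt with h | h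
          · linarith
          · exact absurd h h2
      · refine Or.inl ?_
        rcases mul_eq_zero.mp hhi with h | h
        · linarith
        · exact absurd h h1
    · intro hπ
      by_cases h1 : μlow t = 0
      · by_cases h2 : ρb t = 0
        · exfalso; linarith
        · refine Or.inr (Or.inl ?_)
          rcases mul_eq_zero.mp hrb with h | h
          · linarith
          · exact absurd h h2
      · refine Or.inl ?_
        rcases mul_eq_zero.mp hlo with h | h
        · linarith
        · exact absurd h h1
end
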